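/- arXiv:1103.1408 — 2 statements merged into one kernel-verified Lean document; each statement's English description precedes it below -/
import Mathlib

section
/- Suppose ν ≠ 0 and u = S(A), v = S(B) satisfy both Prandtl's boundary-layer momentum equation u·∂ₓu + v·∂_yu + ∂_tu = ∂_tS(Û) + S(Û)·∂ₓS(Û) + ν·∂_y∂_yu and the continuity equation ∂ₓu + ∂_yv = 0 in MvPowerSeries (Fin 3) ℝ. Then for all i,k ∈ ℕ: A(i,3,k) = (k+1)·A(i,1,k+1)/(6ν). -/
/-- `S A` is the formal power series in the three variables x, y, t whose coefficient of
`x^i y^j t^k` is `A i j k`. -/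
noncomputable def S (A : ℕ → ℕ → ℕ → ℝ) : MvPowerSeries (Fin 3) ℝ :=
  fun m => A (m 0) (m 1) (m 2)

/-- The family of coefficients of the formal partial derivative in x. -/
noncomputable def dx (A : ℕ → ℕ → ℕ → ℝ) : ℕ → ℕ → ℕ → ℝ :=
  fun i j k => ((i : ℝ) + 1) * A (i + 1) j k

/-- The family of coefficients of the formal partial derivative in y. -/
noncomputable def dy (A : ℕ → ℕ → ℕ → ℝ) : ℕ → ℕ → ℕ → ℝ :=
  fun i j k => ((j : ℝ) + 1) * A i (j + 1) k

/-- The family of coefficients of the formal partial derivative in t. -/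
noncomputable def dt (A : ℕ → ℕ → ℕ → ℝ) : ℕ → ℕ → ℕ → ℝ :=
  fun i j k => ((k : ℝ) + 1) * A i j (k + 1)

/-- The external-flow coefficient family `Û`, with `Û i 0 k = U i k` and `Û i j k = 0`
for `j ≥ 1`. -/
noncomputable def Uhat (U : ℕ → ℕ → ℝ) : ℕ → ℕ → ℕ → ℝ :=
  fun i j k => if j = 0 then U i k else 0

lemma coeff_S (f : ℕ → ℕ → ℕ → ℝ) (m : Fin 3 →₀ ℕ) :
    MvPowerSeries.coeff (R := ℝ) m (S f) = f (m 0) (m 1) (m 2) := rfl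

lemma mul_coeff_zero (f g : ℕ → ℕ → ℕ → ℝ) (m : Fin 3 →₀ ℕ)
    (h : ∀ p q : Fin 3 →₀ ℕ, p + q = m →
      f (p 0) (p 1) (p 2) * g (q 0) (q 1) (q 2) = 0) :
    MvPowerSeries.coeff (R := ℝ) m (S f * S g) = 0 := by
  rw [MvPowerSeries.coeff_mul]
  apply Finset.sum_eq_zero
  intro p hp
  exact h p.1 p.2 (Finset.HasAntidiagonal.mem_antidiagonal.mp hp)

theorem prandtl_A_i_three_k (ν : ℝ) (hν : ν ≠ 0) (U : ℕ → ℕ → ℝ)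
    (A B : ℕ → ℕ → ℕ → ℝ)
    (hA : ∀ i k : ℕ, A i 0 k = 0) (hB : ∀ i k : ℕ, B i 0 k = 0)
    (hmom : S A * S (dx A) + S B * S (dy A) + S (dt A) =
      S (dt (Uhat U)) + S (Uhat U) * S (dx (Uhat U)) + ν • S (dy (dy A)))
    (hcont : S (dx A) + S (dy B) = 0) :
    ∀ i k : ℕ, A i 3 k = ((k : ℝ) + 1) * A i 1 (k + 1) / (6 * ν) := by
  have hB1 : ∀ i k : ℕ, B i 1 k = 0 := by
    intro i k
    have h := congrArg (MvPowerSeries.coeff (R := ℝ) (Finsupp.equivFunOnFinite.symm ![i, 0, k])) hcont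
    rw [map_add, map_zero, coeff_S, coeff_S] at h
    simp only [dx, dy, Finsupp.coe_equivFunOnFinite_symm, Matrix.cons_val_zero,
      Matrix.cons_val_one, Matrix.head_cons, Matrix.cons_val_two, Matrix.tail_cons, hA, mul_zero, zero_add, Nat.cast_zero] at h
    linarith
  intro i k
  set m : Fin 3 →₀ ℕ := Finsupp.equivFunOnFinite.symm ![i, 1, k] with hm
  have hm0 : m 0 = i := rfl
  have hm1 : m 1 = 1 := rfl
  have hm2 : m 2 = k := rfl
  have hsplit : ∀ p q : Fin 3 →₀ ℕ, p + q = m → (p 1 = 0 ∧ q 1 = 1) ∨ (p 1 = 1 ∧ q 1 = 0) := by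
    intro p q hpq
    have : p 1 + q 1 = 1 := by
      have := DFunLike.congr_fun hpq 1
      simpa [Finsupp.add_apply, hm1] using this
    omega
  have h := congrArg (MvPowerSeries.coeff (R := ℝ) m) hmom
  rw [map_add, map_add, map_add, map_add] at h
  have h1 : MvPowerSeries.coeff (R := ℝ) m (S A * S (dx A)) = 0 := by
    apply mul_coeff_zero
    intro p q hpq
    rcases hsplit p q hpq with ⟨hp, _⟩ | ⟨_, hq⟩
    · rw [hp, hA, zero_mul]
    · rw [hq]; simp [dx, hA]
  have h2 : MvPowerSeries.coeff (R := ℝ) m (S B * S (dy A)) = 0 := by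
    apply mul_coeff_zero
    intro p q hpq
    rcases hsplit p q hpq with ⟨hp, _⟩ | ⟨hp, _⟩
    · rw [hp, hB, zero_mul]
    · rw [hp, hB1, zero_mul]
  have h3 : MvPowerSeries.coeff (R := ℝ) m (S (Uhat U) * S (dx (Uhat U))) = 0 := by
    apply mul_coeff_zero
    intro p q hpq
    rcases hsplit p q hpq with ⟨_, hq⟩ | ⟨hp, _⟩
    · rw [hq]; simp [dx, Uhat]
    · rw [hp]; simp [Uhat]
  have hsm : MvPowerSeries.coeff (R := ℝ) m (ν • S (dy (dy A))) =
      ν * MvPowerSeries.coeff (R := ℝ) m (S (dy (dy A))) := by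
    rw [MvPowerSeries.coeff_smul]
  rw [h1, h2, h3, hsm, coeff_S, coeff_S, coeff_S, hm0, hm1, hm2] at h
  simp only [dt, dy, Uhat, Nat.cast_one] at h
  norm_num at h
  field_simp
  linarith
end

section
/- Suppose ν ≠ 0 and u = S(A), v = S(B) satisfy both Prandtl's boundary-layer momentum equation u·∂ₓu + v·∂_yu + ∂_tu = ∂_tS(Û) + S(Û)·∂ₓS(Û) + ν·∂_y∂_yu and the continuity equation ∂ₓu + ∂_yv = 0 in MvPowerSeries (Fin 3) ℝ. Then for all i,k ∈ ℕ and all j ≥ 2: A(i,j+2,k) = (1/(ν·(j+1)(j+2)))·[(k+1)·A(i,j,k+1) + Σ_{p=0}^{i} Σ_{q=1}^{j−1} Σ_{r=0}^{k} (i−p+1)·A(p,q,r)·A(i−p+1,j−q,k−r) − Σ_{p=0}^{i} Σ_{q=2}^{j} Σ_{r=0}^{k} ((p+1)(j−q+1)/q)·A(p+1,q−1,r)·A(i−p,j−q+1,k−r)]. -/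
section Aux
open Finset

/-- The exponent triple as a finitely supported function on `Fin 3`. -/
noncomputable def ee (i j k : ℕ) : Fin 3 →₀ ℕ :=
  Finsupp.single 0 i + Finsupp.single 1 j + Finsupp.single 2 k

@[simp] lemma ee0 (i j k : ℕ) : ee i j k 0 = i := by simp [ee]
@[simp] lemma ee1 (i j k : ℕ) : ee i j k 1 = j := by simp [ee]
@[simp] lemma ee2 (i j k : ℕ) : ee i j k 2 = k := by simp [ee]

lemma coeff_S_s14 (A : ℕ → ℕ → ℕ → ℝ) (i j k : ℕ) :
    MvPowerSeries.coeff (ee i j k) (S A) = A i j k := by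
  change A (ee i j k 0) (ee i j k 1) (ee i j k 2) = A i j k
  rw [ee0, ee1, ee2]

lemma eq_ee (m : Fin 3 →₀ ℕ) : m = ee (m 0) (m 1) (m 2) := by
  ext x; fin_cases x <;> simp

lemma coeff_S_mul (A B : ℕ → ℕ → ℕ → ℝ) (i j k : ℕ) :
    MvPowerSeries.coeff (ee i j k) (S A * S B) =
      ∑ p ∈ range (i+1), ∑ q ∈ range (j+1), ∑ r ∈ range (k+1),
        A p q r * B (i-p) (j-q) (k-r) := by
  rw [MvPowerSeries.coeff_mul,
    show (∑ p ∈ range (i+1), ∑ q ∈ range (j+1), ∑ r ∈ range (k+1),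
        A p q r * B (i-p) (j-q) (k-r))
      = ∑ x ∈ range (i+1) ×ˢ (range (j+1) ×ˢ range (k+1)),
          A x.1 x.2.1 x.2.2 * B (i - x.1) (j - x.2.1) (k - x.2.2) from by
      rw [Finset.sum_product]
      exact Finset.sum_congr rfl fun _ _ => by rw [Finset.sum_product]]
  refine Finset.sum_nbij' (fun x => (x.1 0, x.1 1, x.1 2))
    (fun y => (ee y.1 y.2.1 y.2.2, ee (i - y.1) (j - y.2.1) (k - y.2.2))) ?_ ?_ ?_ ?_ ?_
  · rintro ⟨a, b⟩ hab
    rw [HasAntidiagonal.mem_antidiagonal] at hab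
    have h0 : a 0 + b 0 = i := by have := DFunLike.congr_fun hab 0; simpa using this
    have h1 : a 1 + b 1 = j := by have := DFunLike.congr_fun hab 1; simpa using this
    have h2 : a 2 + b 2 = k := by have := DFunLike.congr_fun hab 2; simpa using this
    simp only [Finset.mem_product, Finset.mem_range]
    omega
  · rintro ⟨p, q, r⟩ hy
    simp only [Finset.mem_product, Finset.mem_range] at hy
    rw [HasAntidiagonal.mem_antidiagonal]
    ext x; fin_cases x <;> simp <;> omega
  · rintro ⟨a, b⟩ hab
    rw [HasAntidiagonal.mem_antidiagonal] at hab
    have h0 : a 0 + b 0 = i := by have := DFunLike.congr_fun hab 0; simpa using this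
    have h1 : a 1 + b 1 = j := by have := DFunLike.congr_fun hab 1; simpa using this
    have h2 : a 2 + b 2 = k := by have := DFunLike.congr_fun hab 2; simpa using this
    have ha : ee (a 0) (a 1) (a 2) = a := (eq_ee a).symm
    have hb : ee (i - a 0) (j - a 1) (k - a 2) = b := by
      rw [show i - a 0 = b 0 by omega, show j - a 1 = b 1 by omega,
        show k - a 2 = b 2 by omega]
      exact (eq_ee b).symm
    simp [ha, hb]
  · rintro ⟨p, q, r⟩ hy
    simp
  · rintro ⟨a, b⟩ hab
    rw [HasAntidiagonal.mem_antidiagonal] at hab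
    have h0 : a 0 + b 0 = i := by have := DFunLike.congr_fun hab 0; simpa using this
    have h1 : a 1 + b 1 = j := by have := DFunLike.congr_fun hab 1; simpa using this
    have h2 : a 2 + b 2 = k := by have := DFunLike.congr_fun hab 2; simpa using this
    show S A a * S B b = A (a 0) (a 1) (a 2) * B (i - a 0) (j - a 1) (k - a 2)
    rw [show S A a = A (a 0) (a 1) (a 2) from rfl, show S B b = B (b 0) (b 1) (b 2) from rfl]
    congr 2 <;> omega

end Aux

theorem prandtl_A_recursion (ν : ℝ) (hν : ν ≠ 0) (U : ℕ → ℕ → ℝ)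
    (A B : ℕ → ℕ → ℕ → ℝ)
    (hA : ∀ i k : ℕ, A i 0 k = 0) (hB : ∀ i k : ℕ, B i 0 k = 0)
    (hmom : S A * S (dx A) + S B * S (dy A) + S (dt A) =
      S (dt (Uhat U)) + S (Uhat U) * S (dx (Uhat U)) + ν • S (dy (dy A)))
    (hcont : S (dx A) + S (dy B) = 0) :
    ∀ i k j : ℕ, 2 ≤ j →
      A i (j + 2) k =
        (1 / (ν * ((j : ℝ) + 1) * ((j : ℝ) + 2)))
          * (((k : ℝ) + 1) * A i j (k + 1)
            + (∑ p ∈ Finset.range (i + 1), ∑ q ∈ Finset.Icc 1 (j - 1),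
                ∑ r ∈ Finset.range (k + 1),
                ((i - p + 1 : ℕ) : ℝ) * A p q r * A (i - p + 1) (j - q) (k - r))
            - (∑ p ∈ Finset.range (i + 1), ∑ q ∈ Finset.Icc 2 j,
                ∑ r ∈ Finset.range (k + 1),
                (((p : ℝ) + 1) * ((j - q + 1 : ℕ) : ℝ) / (q : ℝ))
                  * A (p + 1) (q - 1) r * A (i - p) (j - q + 1) (k - r))) := by
  intro i k j hj
  have hj0 : j ≠ 0 := by omega
  -- continuity equation, coefficientwise
  have hcontc : ∀ p q r : ℕ, ((p:ℝ)+1) * A (p+1) q r + ((q:ℝ)+1) * B p (q+1) r = 0 := by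
    intro p q r
    have h := congrArg (MvPowerSeries.coeff (ee p q r)) hcont
    rw [map_add, map_zero, coeff_S_s14, coeff_S_s14] at h
    simpa [dx, dy] using h
  have hBval : ∀ p q r : ℕ, 1 ≤ q →
      B p q r = -(((p:ℝ)+1) * A (p+1) (q-1) r) / q := by
    intro p q r hq
    obtain ⟨q', rfl⟩ : ∃ q', q = q' + 1 := ⟨q - 1, by omega⟩
    have h := hcontc p q' r
    have hq' : ((q':ℝ)+1) ≠ 0 := by positivity
    have hcast : ((q' + 1 : ℕ) : ℝ) = (q' : ℝ) + 1 := by push_cast; ring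
    rw [hcast, Nat.add_sub_cancel, eq_div_iff hq']
    linarith
  -- momentum equation, coefficientwise at (i, j, k)
  have hm := congrArg (MvPowerSeries.coeff (ee i j k)) hmom
  rw [map_add, map_add, map_add, map_add, coeff_S_mul, coeff_S_mul, coeff_S_mul,
    coeff_S_s14, coeff_S_s14, LinearMap.map_smul, coeff_S_s14, smul_eq_mul] at hm
  -- the external-flow terms vanish for j ≥ 1
  have hU1 : dt (Uhat U) i j k = 0 := by simp [dt, Uhat, hj0]
  have hU2 : (∑ p ∈ Finset.range (i+1), ∑ q ∈ Finset.range (j+1), ∑ r ∈ Finset.range (k+1),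
      Uhat U p q r * dx (Uhat U) (i-p) (j-q) (k-r)) = 0 := by
    refine Finset.sum_eq_zero fun p _ => Finset.sum_eq_zero fun q hq =>
      Finset.sum_eq_zero fun r _ => ?_
    rcases Nat.eq_zero_or_pos q with h | h
    · subst h
      simp [dx, Uhat, hj0]
    · simp [Uhat, Nat.pos_iff_ne_zero.mp h]
  rw [hU1, hU2] at hm
  -- rewrite the first nonlinear term
  have hT1 : (∑ p ∈ Finset.range (i+1), ∑ q ∈ Finset.range (j+1), ∑ r ∈ Finset.range (k+1),
        A p q r * dx A (i-p) (j-q) (k-r))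
      = ∑ p ∈ Finset.range (i + 1), ∑ q ∈ Finset.Icc 1 (j - 1), ∑ r ∈ Finset.range (k + 1),
        ((i - p + 1 : ℕ) : ℝ) * A p q r * A (i - p + 1) (j - q) (k - r) := by
    refine Finset.sum_congr rfl fun p hp => ?_
    rw [← Finset.sum_subset
      (show Finset.Icc 1 (j-1) ⊆ Finset.range (j+1) by
        intro q hq; simp only [Finset.mem_Icc] at hq; simp only [Finset.mem_range]; omega)
      (by
        intro q hq hq'
        simp only [Finset.mem_range] at hq
        simp only [Finset.mem_Icc] at hq'
        have hcases : q = 0 ∨ q = j := by omega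
        refine Finset.sum_eq_zero fun r _ => ?_
        rcases hcases with rfl | rfl
        · simp [hA]
        · simp [dx, Nat.sub_self, hA])]
    refine Finset.sum_congr rfl fun q hq => Finset.sum_congr rfl fun r hr => ?_
    simp only [dx]
    push_cast
    ring
  -- rewrite the second nonlinear term using the continuity equation
  have hT2 : (∑ p ∈ Finset.range (i+1), ∑ q ∈ Finset.range (j+1), ∑ r ∈ Finset.range (k+1),
        B p q r * dy A (i-p) (j-q) (k-r))
      = -∑ p ∈ Finset.range (i + 1), ∑ q ∈ Finset.Icc 2 j, ∑ r ∈ Finset.range (k + 1),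
        (((p : ℝ) + 1) * ((j - q + 1 : ℕ) : ℝ) / (q : ℝ))
          * A (p + 1) (q - 1) r * A (i - p) (j - q + 1) (k - r) := by
    rw [← Finset.sum_neg_distrib]
    refine Finset.sum_congr rfl fun p hp => ?_
    rw [← Finset.sum_subset
      (show Finset.Icc 2 j ⊆ Finset.range (j+1) by
        intro q hq; simp only [Finset.mem_Icc] at hq; simp only [Finset.mem_range]; omega)
      (by
        intro q hq hq'
        simp only [Finset.mem_range] at hq
        simp only [Finset.mem_Icc] at hq'
        have hcases : q = 0 ∨ q = 1 := by omega
        refine Finset.sum_eq_zero fun r _ => ?_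
        rcases hcases with rfl | rfl
        · simp [hB]
        · rw [hBval p 1 r le_rfl]
          simp [hA])]
    rw [← Finset.sum_neg_distrib]
    refine Finset.sum_congr rfl fun q hq => ?_
    rw [← Finset.sum_neg_distrib]
    refine Finset.sum_congr rfl fun r hr => ?_
    simp only [Finset.mem_Icc] at hq
    rw [hBval p q r (by omega)]
    have hqR : (q : ℝ) ≠ 0 := by
      have : 0 < q := by omega
      positivity
    simp only [dy]
    have hc1 : ((j - q + 1 : ℕ) : ℝ) = ((j - q : ℕ) : ℝ) + 1 := by push_cast; ring
    rw [hc1, div_eq_mul_inv, div_eq_mul_inv]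
    ring
  rw [hT1, hT2] at hm
  -- final arithmetic
  simp only [dt, dy] at hm
  have h1 : ((j:ℝ)+1) ≠ 0 := by positivity
  have h2 : ((j:ℝ)+2) ≠ 0 := by positivity
  have hden : ν * ((j:ℝ)+1) * ((j:ℝ)+2) ≠ 0 := mul_ne_zero (mul_ne_zero hν h1) h2
  rw [show j+1+1 = j+2 from rfl] at hm
  rw [one_div_mul_eq_div, eq_div_iff hden]
  push_cast at hm ⊢
  linear_combination -hm
end
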